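/- Let Rad be an irreducible root system in a finite-dimensional real inner product space V, let Λ = ℤ[Rad] be the additive subgroup of V generated by Rad, and let η : Λ → {1, −1} be a group homomorphism (from (Λ,+) to ({±1},·)). Then there exists a regular vector v ∈ V such that η(α) = −1 for at most one simple root α ∈ B(v). -/

import Mathlib

open scoped RealInnerProductSpace

namespace PaperRS

variable {V : Type*} [NormedAddCommGroup V] [InnerProductSpace ℝ V]

/-- The reflection in a root `α`. -/
noncomputable def reflRoot (α x : V) : V := x - (2 * ⟪x, α⟫ / ⟪α, α⟫) • α

/-- `Rad` is a (reduced, crystallographic) root system in `V`. -/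
structure IsRootSystem (Rad : Set V) : Prop where
  finite : Rad.Finite
  nonzero : ∀ α ∈ Rad, α ≠ 0
  spanning : Submodule.span ℝ Rad = ⊤
  integral : ∀ α ∈ Rad, ∀ β ∈ Rad, ∃ n : ℤ, 2 * ⟪β, α⟫ / ⟪α, α⟫ = (n : ℝ)
  reflMem : ∀ α ∈ Rad, ∀ β ∈ Rad, reflRoot α β ∈ Rad
  reduced : ∀ α ∈ Rad, ∀ c : ℝ, c • α ∈ Rad → c = 1 ∨ c = -1

/-- Irreducibility: `Rad` is not the union of two nonempty mutually orthogonal subsets. -/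
def IsIrreducible (Rad : Set V) : Prop :=
  ¬ ∃ R₁ R₂ : Set V, R₁.Nonempty ∧ R₂.Nonempty ∧ Rad = R₁ ∪ R₂ ∧
      ∀ α ∈ R₁, ∀ β ∈ R₂, ⟪α, β⟫ = 0

/-- An involution of the root system `Rad`: an orthogonal linear automorphism `t` of `V`
with `t(Rad) = Rad` and `t ∘ t = id`. -/
structure IsInvolution (Rad : Set V) (t : V ≃ₗᵢ[ℝ] V) : Prop where
  maps : (⇑t) '' Rad = Rad
  invol : ∀ x : V, t (t x) = x

/-- Two roots are strongly orthogonal if neither their sum nor their difference is a root. -/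
def StronglyOrthogonal (Rad : Set V) (α β : V) : Prop :=
  α ≠ β ∧ α ≠ -β ∧ α + β ∉ Rad ∧ α - β ∉ Rad

/-- A vector is regular for `Rad` if it is orthogonal to no root. -/
def IsRegular (Rad : Set V) (v : V) : Prop := ∀ α ∈ Rad, ⟪α, v⟫ ≠ 0

/-- The positive roots determined by a regular vector `v`. -/
def posRoots (Rad : Set V) (v : V) : Set V := {α ∈ Rad | 0 < ⟪α, v⟫}

/-- The base of simple roots determined by a regular vector `v`: the positive roots which
are not sums of two positive roots. -/
def simpleBase (Rad : Set V) (v : V) : Set V :=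
  {α ∈ posRoots Rad v | ¬ ∃ β ∈ posRoots Rad v, ∃ γ ∈ posRoots Rad v, α = β + γ}

/-- A regular vector `v` is an S-chamber vector for an involution `t` if
`(α,v)·(t α,v) > 0` for every complex root `α` (i.e. every root with `t α ≠ ±α`). -/
def IsSChamber (Rad : Set V) (t : V ≃ₗᵢ[ℝ] V) (v : V) : Prop :=
  IsRegular Rad v ∧
    ∀ α ∈ Rad, t α ≠ α → t α ≠ -α → 0 < ⟪α, v⟫ * ⟪t α, v⟫

/-- `P ⊆ Rad` is parabolic if `P ∪ (-P) = Rad` and `P` is closed under root addition. -/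
def IsParabolic (Rad P : Set V) : Prop :=
  P ⊆ Rad ∧ (∀ α ∈ Rad, α ∈ P ∨ -α ∈ P) ∧
    ∀ α ∈ P, ∀ β ∈ P, α + β ∈ Rad → α + β ∈ P

/-- Composition `s_{β 0} ∘ s_{β 1} ∘ ⋯ ∘ s_{β (r-1)}` of the reflections in the roots
`β 0, …, β (r-1)`. -/
noncomputable def reflComp : (r : ℕ) → (Fin r → V) → V → V
  | 0, _ => id
  | r + 1, β => reflRoot (β 0) ∘ reflComp r (fun i => β i.succ)



section Proof15

variable {Rad : Set V}

lemma root_inner_self_pos (hRS : IsRootSystem Rad) {α : V} (hα : α ∈ Rad) :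
    0 < ⟪α, α⟫ := by
  rw [real_inner_self_eq_norm_sq]
  have : ‖α‖ ≠ 0 := norm_ne_zero_iff.2 (hRS.nonzero α hα)
  positivity

lemma neg_mem_rad (hRS : IsRootSystem Rad) {α : V} (hα : α ∈ Rad) : -α ∈ Rad := by
  have h := hRS.reflMem α hα α hα
  have h0 : ⟪α, α⟫ ≠ 0 := ne_of_gt (root_inner_self_pos hRS hα)
  have h2 : 2 * ⟪α, α⟫ / ⟪α, α⟫ = (2 : ℝ) := by
    rw [mul_div_assoc, div_self h0, mul_one]
  rw [reflRoot, h2] at h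
  have : α - (2:ℝ) • α = -α := by
    rw [two_smul]; abel
  rwa [this] at h

/-- The root-string lemma: if two distinct roots have positive inner product, their
difference is a root. -/
lemma sub_mem_of_inner_pos (hRS : IsRootSystem Rad) {α β : V} (hα : α ∈ Rad)
    (hβ : β ∈ Rad) (hne : α ≠ β) (hpos : 0 < ⟪α, β⟫) : α - β ∈ Rad := by
  obtain ⟨n₁, hn₁⟩ := hRS.integral β hβ α hα
  obtain ⟨n₂, hn₂⟩ := hRS.integral α hα β hβ
  have ha := root_inner_self_pos hRS hα
  have hb := root_inner_self_pos hRS hβ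
  have hIc : ⟪β, α⟫ = ⟪α, β⟫ := real_inner_comm α β
  -- n₁, n₂ ≥ 1
  have h2a : 2 * ⟪α, β⟫ = n₁ * ⟪β, β⟫ := by
    field_simp at hn₁; linarith [hn₁]
  have h2b : 2 * ⟪α, β⟫ = n₂ * ⟪α, α⟫ := by
    rw [hIc] at hn₂
    field_simp at hn₂; linarith [hn₂]
  have hn₁pos : (1 : ℤ) ≤ n₁ := by
    by_contra h
    push_neg at h
    have : (n₁ : ℝ) ≤ 0 := by exact_mod_cast Int.lt_add_one_iff.mp h
    nlinarith
  have hn₂pos : (1 : ℤ) ≤ n₂ := by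
    by_contra h
    push_neg at h
    have : (n₂ : ℝ) ≤ 0 := by exact_mod_cast Int.lt_add_one_iff.mp h
    nlinarith
  -- strict Cauchy-Schwarz
  have hsCS : ⟪α, β⟫ < ‖α‖ * ‖β‖ := by
    rw [inner_lt_norm_mul_iff_real]
    intro heq
    have hβn : ‖β‖ ≠ 0 := norm_ne_zero_iff.2 (hRS.nonzero β hβ)
    have h1 : α = (‖β‖⁻¹ * ‖α‖) • β := by
      have h1 : (‖β‖)⁻¹ • (‖β‖ • α) = (‖β‖)⁻¹ • (‖α‖ • β) := by rw [heq]
      rwa [smul_smul, smul_smul, inv_mul_cancel₀ hβn, one_smul] at h1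
    have hmem : (‖β‖⁻¹ * ‖α‖) • β ∈ Rad := by rw [← h1]; exact hα
    rcases hRS.reduced β hβ _ hmem with hc | hc
    · apply hne; rw [h1, hc, one_smul]
    · have hαn : ‖α‖ ≠ 0 := norm_ne_zero_iff.2 (hRS.nonzero α hα)
      have hp2 : 0 < ‖β‖⁻¹ * ‖α‖ := by
        have : ‖β‖ ≠ 0 := hβn
        positivity
      rw [hc] at hp2; linarith
  have hna : ⟪α, α⟫ = ‖α‖ ^ 2 := real_inner_self_eq_norm_sq α
  have hnb : ⟪β, β⟫ = ‖β‖ ^ 2 := real_inner_self_eq_norm_sq β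
  have hprod : (n₁ : ℝ) * n₂ < 4 := by
    have h1 : ⟪α, β⟫ ^ 2 < ⟪α, α⟫ * ⟪β, β⟫ := by
      rw [hna, hnb]
      nlinarith
    nlinarith
  have hprodZ : n₁ * n₂ < 4 := by exact_mod_cast hprod
  have hcase : n₁ = 1 ∨ n₂ = 1 := by
    by_contra h
    push_neg at h
    have h1 : 2 ≤ n₁ := by omega
    have h2 : 2 ≤ n₂ := by omega
    nlinarith
  rcases hcase with h | h
  · -- reflRoot β α = α - β
    have := hRS.reflMem β hβ α hα
    rw [reflRoot, hn₁, h] at this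
    simpa using this
  · -- reflRoot α β = β - α, then negate
    have hmem := hRS.reflMem α hα β hβ
    rw [reflRoot, hn₂, h] at hmem
    have : β - ((1:ℤ):ℝ) • α = β - α := by norm_num
    rw [this] at hmem
    have := neg_mem_rad hRS hmem
    simpa using this


lemma posRoots_finite (hRS : IsRootSystem Rad) (v : V) : (posRoots Rad v).Finite :=
  hRS.finite.subset (fun _ hx => hx.1)

lemma posRoots_induction (hRS : IsRootSystem Rad) (v : V) (P : V → Prop)
    (h1 : ∀ ζ ∈ simpleBase Rad v, P ζ)
    (h2 : ∀ β γ, β ∈ posRoots Rad v → γ ∈ posRoots Rad v → (β + γ) ∈ posRoots Rad v →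
      P β → P γ → P (β + γ)) :
    ∀ ζ ∈ posRoots Rad v, P ζ := by
  have hfin := posRoots_finite hRS v
  suffices h : ∀ n : ℕ, ∀ ζ ∈ posRoots Rad v,
      ({δ ∈ posRoots Rad v | ⟪δ, v⟫ < ⟪ζ, v⟫}).ncard ≤ n → P ζ by
    intro ζ hζ; exact h _ ζ hζ le_rfl
  intro n
  induction n using Nat.strong_induction_on with
  | _ n ih =>
    intro ζ hζ hcard
    by_cases hs : ζ ∈ simpleBase Rad v
    · exact h1 ζ hs
    · have hdec : ∃ β ∈ posRoots Rad v, ∃ γ ∈ posRoots Rad v, ζ = β + γ := by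
        by_contra h
        exact hs ⟨hζ, h⟩
      obtain ⟨β, hβ, γ, hγ, hζeq⟩ := hdec
      have hsplit : ⟪ζ, v⟫ = ⟪β, v⟫ + ⟪γ, v⟫ := by
        rw [hζeq, inner_add_left]
      have hkey : ∀ δ ∈ posRoots Rad v, ⟪δ, v⟫ < ⟪ζ, v⟫ →
          ({ε ∈ posRoots Rad v | ⟪ε, v⟫ < ⟪δ, v⟫}).ncard < n := by
        intro δ hδ hlt
        have hss : {ε ∈ posRoots Rad v | ⟪ε, v⟫ < ⟪δ, v⟫} ⊂
            {ε ∈ posRoots Rad v | ⟪ε, v⟫ < ⟪ζ, v⟫} := by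
          constructor
          · intro ε hε; exact ⟨hε.1, lt_trans hε.2 hlt⟩
          · intro hcontra
            have : δ ∈ {ε ∈ posRoots Rad v | ⟪ε, v⟫ < ⟪δ, v⟫} := hcontra ⟨hδ, hlt⟩
            exact lt_irrefl _ this.2
        have hlt2 := Set.ncard_lt_ncard hss (hfin.subset (fun x hx => hx.1))
        omega
      have hβlt : ⟪β, v⟫ < ⟪ζ, v⟫ := by
        have := hγ.2; linarith [hsplit]
      have hγlt : ⟪γ, v⟫ < ⟪ζ, v⟫ := by
        have := hβ.2; linarith [hsplit]
      have Pβ : P β := ih _ (hkey β hβ hβlt) β hβ le_rfl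
      have Pγ : P γ := ih _ (hkey γ hγ hγlt) γ hγ le_rfl
      rw [hζeq]
      exact h2 β γ hβ hγ (hζeq ▸ hζ) Pβ Pγ

lemma posRoots_mem_closure (hRS : IsRootSystem Rad) (v : V) :
    ∀ ζ ∈ posRoots Rad v, ζ ∈ AddSubmonoid.closure (simpleBase Rad v) :=
  posRoots_induction hRS v _ (fun _ hζ => AddSubmonoid.subset_closure hζ)
    (fun _ _ _ _ _ hβ hγ => AddSubmonoid.add_mem _ hβ hγ)

lemma pos_or_neg_root (hRS : IsRootSystem Rad) {v : V} (hv : IsRegular Rad v) {ζ : V}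
    (hζ : ζ ∈ Rad) : ζ ∈ posRoots Rad v ∨ -ζ ∈ posRoots Rad v := by
  rcases lt_or_gt_of_ne (hv ζ hζ) with h | h
  · right
    refine ⟨neg_mem_rad hRS hζ, ?_⟩
    rw [inner_neg_left]; linarith
  · left; exact ⟨hζ, h⟩

lemma simple_obtuse (hRS : IsRootSystem Rad) {v : V} (hv : IsRegular Rad v) {α β : V}
    (hα : α ∈ simpleBase Rad v) (hβ : β ∈ simpleBase Rad v) (hne : α ≠ β) :
    ⟪α, β⟫ ≤ 0 := by
  by_contra h
  push_neg at h
  have hαR : α ∈ Rad := hα.1.1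
  have hβR : β ∈ Rad := hβ.1.1
  have hd : α - β ∈ Rad := sub_mem_of_inner_pos hRS hαR hβR hne h
  rcases lt_or_gt_of_ne (hv _ hd) with hlt | hgt
  · -- β - α is a positive root; β = α + (β - α), contradicting simplicity of β
    have hd' : β - α ∈ Rad := by
      have := neg_mem_rad hRS hd; simpa using this
    have hpos' : β - α ∈ posRoots Rad v := by
      refine ⟨hd', ?_⟩
      have : ⟪β - α, v⟫ = -⟪α - β, v⟫ := by
        rw [← inner_neg_left]; norm_num
      rw [this]; linarith
    exact hβ.2 ⟨α, hα.1, β - α, hpos', by abel⟩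
  · have hpos' : α - β ∈ posRoots Rad v := ⟨hd, hgt⟩
    exact hα.2 ⟨β, hβ.1, α - β, hpos', by abel⟩

lemma linearIndependent_of_obtuse {B : Set V} {v : V}
    (hpos : ∀ x ∈ B, 0 < ⟪x, v⟫)
    (hob : ∀ x ∈ B, ∀ y ∈ B, x ≠ y → ⟪x, y⟫ ≤ 0) :
    LinearIndependent ℝ ((↑) : B → V) := by
  rw [linearIndependent_iff']
  intro s g hsum i hi
  classical
  have hsplit : (∑ j ∈ s.filter (fun j => 0 < g j), g j • (j : V))
      + ∑ j ∈ s.filter (fun j => ¬ 0 < g j), g j • (j : V) = 0 := by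
    rw [Finset.sum_filter_add_sum_filter_not]
    exact hsum
  have hxpeq : (∑ j ∈ s.filter (fun j => 0 < g j), g j • (j : V))
      = ∑ j ∈ s.filter (fun j => ¬ 0 < g j), (-(g j)) • (j : V) := by
    have h : ∑ j ∈ s.filter (fun j => ¬ 0 < g j), (-(g j)) • (j : V)
        = -∑ j ∈ s.filter (fun j => ¬ 0 < g j), g j • (j : V) := by
      rw [← Finset.sum_neg_distrib]
      congr 1; ext j; rw [neg_smul]
    rw [h]
    linear_combination (norm := abel) hsplit
  have hxpz : (∑ j ∈ s.filter (fun j => 0 < g j), g j • (j : V)) = 0 := by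
    apply real_inner_self_nonpos.1
    calc ⟪(∑ j ∈ s.filter (fun j => 0 < g j), g j • (j : V)),
          (∑ j ∈ s.filter (fun j => 0 < g j), g j • (j : V))⟫
        = ⟪(∑ j ∈ s.filter (fun j => 0 < g j), g j • (j : V)),
          (∑ j ∈ s.filter (fun j => ¬ 0 < g j), (-(g j)) • (j : V))⟫ := by rw [← hxpeq]
      _ ≤ 0 := by
        rw [inner_sum]
        apply Finset.sum_nonpos
        intro k hk
        rw [real_inner_smul_right, sum_inner, Finset.mul_sum]
        apply Finset.sum_nonpos
        intro j hj
        rw [real_inner_smul_left]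
        have hjmem := Finset.mem_filter.1 hj
        have hkmem := Finset.mem_filter.1 hk
        have hjk : (j : V) ≠ (k : V) := by
          intro heq
          have : j = k := Subtype.coe_injective heq
          rw [this] at hjmem
          exact hkmem.2 hjmem.2
        have h1 : 0 < g j := hjmem.2
        have h2 : ¬ 0 < g k := hkmem.2
        have h3 : ⟪(j : V), (k : V)⟫ ≤ 0 := hob _ j.2 _ k.2 hjk
        have h4 : 0 ≤ -(g k) := by push_neg at h2; linarith
        have h5 : g j * ⟪(j : V), (k : V)⟫ ≤ 0 := mul_nonpos_of_nonneg_of_nonpos (le_of_lt h1) h3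
        exact mul_nonpos_of_nonneg_of_nonpos h4 h5
  -- now all coefficients in sp vanish trivially; show sp = ∅, then all g ≤ 0 sum zero
  have hspempty : ∀ j ∈ s, ¬ 0 < g j := by
    intro j hj hgj
    have hz : ⟪(∑ j ∈ s.filter (fun j => 0 < g j), g j • (j : V)), v⟫ = 0 := by
      rw [hxpz, inner_zero_left]
    rw [sum_inner] at hz
    have hpos' : 0 < ∑ j ∈ s.filter (fun j => 0 < g j), ⟪g j • (j : V), v⟫ := by
      apply Finset.sum_pos
      · intro k hk
        have hkmem := Finset.mem_filter.1 hk
        rw [real_inner_smul_left]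
        exact mul_pos hkmem.2 (hpos _ k.2)
      · exact ⟨j, Finset.mem_filter.2 ⟨hj, hgj⟩⟩
    linarith
  -- hence s.filter (¬ 0 < g) = s and ∑ over it is 0
  have hall : ∑ j ∈ s, g j • (j : V) = 0 := hsum
  have hz : ⟪∑ j ∈ s, g j • (j : V), v⟫ = 0 := by rw [hall, inner_zero_left]
  rw [sum_inner] at hz
  have heach : ∀ j ∈ s, ⟪g j • (j : V), v⟫ = 0 := by
    have hnonpos : ∀ j ∈ s, ⟪g j • (j : V), v⟫ ≤ 0 := by
      intro j hj
      rw [real_inner_smul_left]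
      have h1 : g j ≤ 0 := by have := hspempty j hj; linarith [not_lt.1 this]
      have h2 : 0 < ⟪(j : V), v⟫ := hpos _ j.2
      nlinarith
    intro j hj
    exact (Finset.sum_eq_zero_iff_of_nonpos hnonpos).1 hz j hj
  have := heach i hi
  rw [real_inner_smul_left] at this
  have h2 : 0 < ⟪(i : V), v⟫ := hpos _ i.2
  rcases mul_eq_zero.1 this with h | h
  · exact h
  · exact absurd h (ne_of_gt h2)

lemma simple_span (hRS : IsRootSystem Rad) {v : V} (hv : IsRegular Rad v) :
    Submodule.span ℝ (simpleBase Rad v) = ⊤ := by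
  have hsub : Rad ⊆ (Submodule.span ℝ (simpleBase Rad v) : Set V) := by
    intro ζ hζ
    have hmono : AddSubmonoid.closure (simpleBase Rad v) ≤
        (Submodule.span ℝ (simpleBase Rad v)).toAddSubmonoid := by
      rw [AddSubmonoid.closure_le]
      exact Submodule.subset_span
    rcases pos_or_neg_root hRS hv hζ with h | h
    · exact hmono (posRoots_mem_closure hRS v ζ h)
    · have : -ζ ∈ (Submodule.span ℝ (simpleBase Rad v) : Set V) :=
        hmono (posRoots_mem_closure hRS v (-ζ) h)
      have := Submodule.neg_mem _ this
      simpa using this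
  have h1 : Submodule.span ℝ Rad ≤ Submodule.span ℝ (simpleBase Rad v) :=
    Submodule.span_le.2 hsub
  rw [hRS.spanning] at h1
  exact top_le_iff.1 h1


-- general position / obtuse-basis lemmas
lemma exists_orth_ne (F : Finset V) (hF : ∀ α ∈ F, α ≠ (0 : V)) :
    ∃ w : V, ∀ α ∈ F, ⟪α, w⟫ ≠ 0 := by
  classical
  induction F using Finset.induction_on with
  | empty => exact ⟨0, by simp⟩
  | insert _ _ hnm ih =>
    rename_i a s
    obtain ⟨w, hw⟩ := ih (fun α hα => hF α (Finset.mem_insert_of_mem hα))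
    have ha : a ≠ 0 := hF a (Finset.mem_insert_self a s)
    have haa : ⟪a, a⟫ ≠ 0 := by
      rw [real_inner_self_eq_norm_sq]
      have : ‖a‖ ≠ 0 := norm_ne_zero_iff.2 ha
      positivity
    set bad : Finset ℝ :=
      insert (-⟪a, w⟫ / ⟪a, a⟫) (s.image fun β => -⟪β, w⟫ / ⟪β, a⟫) with hbad
    obtain ⟨t, ht⟩ := Infinite.exists_notMem_finset bad
    refine ⟨w + t • a, ?_⟩
    intro β hβ
    rcases Finset.mem_insert.1 hβ with rfl | hβs
    · intro hcon
      rw [inner_add_right, real_inner_smul_right] at hcon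
      apply ht
      have hteq : t = -⟪β, w⟫ / ⟪β, β⟫ := by field_simp; linarith
      rw [hbad, hteq]
      exact Finset.mem_insert_self _ _
    · intro hcon
      rw [inner_add_right, real_inner_smul_right] at hcon
      by_cases hba : ⟪β, a⟫ = 0
      · rw [hba] at hcon
        exact hw β hβs (by linarith)
      · apply ht
        rw [hbad]
        apply Finset.mem_insert_of_mem
        rw [Finset.mem_image]
        refine ⟨β, hβs, ?_⟩
        field_simp
        linarith


/-- Coordinates w.r.t. an "obtuse" basis of a vector with nonnegative pairings. -/
lemma repr_nonneg_of_inner_nonneg {ι : Type*} [Fintype ι] (b : Module.Basis ι ℝ V)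
    (hob : ∀ i j, i ≠ j → ⟪b i, b j⟫ ≤ 0) (x : V) (hx : ∀ i, 0 ≤ ⟪b i, x⟫) :
    ∀ i, 0 ≤ b.repr x i := by
  classical
  set c : ι → ℝ := fun i => b.repr x i with hc
  set N : Finset ι := Finset.univ.filter (fun i => c i < 0) with hN
  set xm : V := ∑ j ∈ N, (-(c j)) • b j with hxm
  have hxsum : x = ∑ i, c i • b i := (Module.Basis.sum_repr b x).symm
  have hsplit : x = (∑ i ∈ Finset.univ.filter (fun i => ¬ c i < 0), c i • b i) - xm := by
    have h1 : (∑ i ∈ Finset.univ.filter (fun i => ¬ c i < 0), c i • b i) - xm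
        = (∑ i ∈ Finset.univ.filter (fun i => ¬ c i < 0), c i • b i)
          + ∑ j ∈ N, c j • b j := by
      rw [hxm, sub_eq_add_neg, ← Finset.sum_neg_distrib]
      congr 1
      apply Finset.sum_congr rfl
      intro j _
      rw [neg_smul, neg_neg]
    rw [h1, hxsum,
      ← Finset.sum_filter_add_sum_filter_not Finset.univ (fun i => c i < 0)
        (fun i => c i • b i), add_comm]
  have hxmz : xm = 0 := by
    apply real_inner_self_nonpos.1
    have hxmAx : xm = (∑ i ∈ Finset.univ.filter (fun i => ¬ c i < 0), c i • b i) - x := by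
      rw [hsplit]; abel
    have hexpand : ⟪xm, xm⟫ = ⟪xm, (∑ i ∈ Finset.univ.filter (fun i => ¬ c i < 0), c i • b i)⟫ - ⟪xm, x⟫ := by
      nth_rewrite 2 [hxmAx]
      rw [inner_sub_right]
    rw [hexpand]
    have h1 : ⟪xm, (∑ i ∈ Finset.univ.filter (fun i => ¬ c i < 0), c i • b i)⟫ ≤ 0 := by
      rw [inner_sum]
      apply Finset.sum_nonpos
      intro i hi
      rw [real_inner_smul_right, hxm, sum_inner, Finset.mul_sum]
      apply Finset.sum_nonpos
      intro j hj
      rw [real_inner_smul_left]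
      have himem := Finset.mem_filter.1 hi
      have hjmem := Finset.mem_filter.1 hj
      have hij : j ≠ i := by
        intro heq
        rw [heq] at hjmem
        exact himem.2 hjmem.2
      have h3 : ⟪b j, b i⟫ ≤ 0 := hob j i hij
      have h4 : 0 ≤ -(c j) := by have := hjmem.2; linarith
      have h5 : 0 ≤ c i := by have := himem.2; linarith
      have h6 : -(c j) * ⟪b j, b i⟫ ≤ 0 := mul_nonpos_of_nonneg_of_nonpos h4 h3
      exact mul_nonpos_of_nonneg_of_nonpos h5 h6
    have h2 : 0 ≤ ⟪xm, x⟫ := by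
      rw [hxm, sum_inner]
      apply Finset.sum_nonneg
      intro j hj
      rw [real_inner_smul_left]
      have hjmem := Finset.mem_filter.1 hj
      have h4 : 0 ≤ -(c j) := by have := hjmem.2; linarith
      exact mul_nonneg h4 (hx j)
    linarith
  intro i
  by_contra hneg
  push_neg at hneg
  have hiN : i ∈ N := Finset.mem_filter.2 ⟨Finset.mem_univ i, hneg⟩
  have : b.repr xm i = -(c i) := by
    rw [hxm]
    rw [map_sum]
    rw [Finsupp.finset_sum_apply]
    rw [Finset.sum_eq_single i]
    · rw [map_smul, Module.Basis.repr_self]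
      simp
    · intro j _ hji
      rw [map_smul, Module.Basis.repr_self]
      simp [Finsupp.single_apply, hji]
    · intro habs
      exact absurd hiN habs
  rw [hxmz, map_zero] at this
  simp only [Finsupp.coe_zero, Pi.zero_apply] at this
  have : c i = 0 := by linarith [this.symm]
  linarith


section Coords

variable {ι : Type*} (b : Module.Basis ι ℝ V) {v : V}

/-- Coordinates of a positive root are nonnegative. -/
lemma repr_nonneg_of_posRoot (hRS : IsRootSystem Rad)
    (hbs : simpleBase Rad v ⊆ Set.range b) {ζ : V} (hζ : ζ ∈ posRoots Rad v) :
    ∀ i, 0 ≤ b.repr ζ i := by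
  classical
  have hcl := posRoots_mem_closure hRS v ζ hζ
  clear hζ
  induction hcl using AddSubmonoid.closure_induction with
  | mem x hx =>
    obtain ⟨j, hj⟩ := hbs hx
    intro i
    rw [← hj, Module.Basis.repr_self, Finsupp.single_apply]
    split <;> norm_num
  | zero => intro i; rw [map_zero]; simp
  | add x y _ _ hx hy =>
    intro i
    rw [map_add]
    have := hx i
    have := hy i
    simp only [Finsupp.add_apply]
    linarith

/-- Coordinates of a positive root are integers. -/
lemma repr_int_of_posRoot (hRS : IsRootSystem Rad)
    (hbs : simpleBase Rad v ⊆ Set.range b) {ζ : V} (hζ : ζ ∈ posRoots Rad v) :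
    ∀ i, ∃ n : ℤ, b.repr ζ i = (n : ℝ) := by
  classical
  have hcl := posRoots_mem_closure hRS v ζ hζ
  clear hζ
  induction hcl using AddSubmonoid.closure_induction with
  | mem x hx =>
    obtain ⟨j, hj⟩ := hbs hx
    intro i
    rw [← hj, Module.Basis.repr_self, Finsupp.single_apply]
    split
    · exact ⟨1, by norm_num⟩
    · exact ⟨0, by norm_num⟩
  | zero => intro i; rw [map_zero]; exact ⟨0, by simp⟩
  | add x y _ _ hx hy =>
    intro i
    obtain ⟨n, hn⟩ := hx i
    obtain ⟨m, hm⟩ := hy i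
    refine ⟨n + m, ?_⟩
    rw [map_add]
    simp only [Finsupp.add_apply]
    push_cast
    rw [hn, hm]

lemma repr_int_of_root (hRS : IsRootSystem Rad) (hv : IsRegular Rad v)
    (hbs : simpleBase Rad v ⊆ Set.range b) {ζ : V} (hζ : ζ ∈ Rad) :
    ∀ i, ∃ n : ℤ, b.repr ζ i = (n : ℝ) := by
  rcases pos_or_neg_root hRS hv hζ with h | h
  · exact repr_int_of_posRoot b hRS hbs h
  · intro i
    obtain ⟨n, hn⟩ := repr_int_of_posRoot b hRS hbs h i
    refine ⟨-n, ?_⟩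
    rw [map_neg] at hn
    simp only [Finsupp.neg_apply] at hn
    push_cast
    linarith

lemma repr_same_sign (hRS : IsRootSystem Rad) (hv : IsRegular Rad v)
    (hbs : simpleBase Rad v ⊆ Set.range b) {ζ : V} (hζ : ζ ∈ Rad) :
    (∀ i, 0 ≤ b.repr ζ i) ∨ (∀ i, b.repr ζ i ≤ 0) := by
  rcases pos_or_neg_root hRS hv hζ with h | h
  · exact Or.inl (repr_nonneg_of_posRoot b hRS hbs h)
  · right
    intro i
    have := repr_nonneg_of_posRoot b hRS hbs h i
    rw [map_neg] at this
    simp only [Finsupp.neg_apply] at this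
    linarith

lemma exists_pos_coord (hRS : IsRootSystem Rad)
    (hbs : simpleBase Rad v ⊆ Set.range b) {ζ : V} (hζ : ζ ∈ posRoots Rad v) :
    ∃ i, 0 < b.repr ζ i := by
  have hne : ζ ≠ 0 := hRS.nonzero ζ hζ.1
  have hrne : b.repr ζ ≠ 0 := by
    intro h
    apply hne
    have := b.repr.injective (a₁ := ζ) (a₂ := 0) (by rw [h, map_zero])
    exact this
  obtain ⟨i, hi⟩ := Finsupp.ne_iff.1 hrne
  refine ⟨i, ?_⟩
  rcases (repr_nonneg_of_posRoot b hRS hbs hζ i).lt_or_eq with h | h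
  · exact h
  · exact absurd h.symm (by simpa using hi)

/-- Auxiliary: two positive roots supported in mutually orthogonal parts of the base
cannot sum to a root. -/
lemma mixed_case_aux [Fintype ι] (hRS : IsRootSystem Rad) (hv : IsRegular Rad v)
    (hbs : simpleBase Rad v ⊆ Set.range b)
    (S : Set ι) (hS : ∀ i ∈ S, ∀ k ∉ S, ⟪b i, b k⟫ = 0) {β γ : V}
    (hβ : β ∈ posRoots Rad v) (hγ : γ ∈ posRoots Rad v) (hβγ : β + γ ∈ posRoots Rad v)
    (hSβ : ∀ i ∉ S, b.repr β i = 0) (hSγ : ∀ i ∈ S, b.repr γ i = 0) : False := by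
  classical
  have hβR : β ∈ Rad := hβ.1
  have hγR : γ ∈ Rad := hγ.1
  have hζR : β + γ ∈ Rad := hβγ.1
  have h0 : ⟪β, γ⟫ = 0 := by
    calc ⟪β, γ⟫ = ⟪∑ i, b.repr β i • b i, γ⟫ := by rw [Module.Basis.sum_repr]
      _ = 0 := by
        rw [sum_inner]
        apply Finset.sum_eq_zero
        intro i _
        rw [real_inner_smul_left]
        by_cases hiS : i ∈ S
        · have hbi : ⟪b i, γ⟫ = 0 := by
            calc ⟪b i, γ⟫ = ⟪b i, ∑ k, b.repr γ k • b k⟫ := by rw [Module.Basis.sum_repr]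
              _ = 0 := by
                rw [inner_sum]
                apply Finset.sum_eq_zero
                intro k _
                rw [real_inner_smul_right]
                by_cases hkS : k ∈ S
                · rw [hSγ k hkS]; ring
                · rw [hS i hiS k hkS]; ring
          rw [hbi]; ring
        · rw [hSβ i hiS]; ring
  have ha := root_inner_self_pos hRS hβR
  have hc := root_inner_self_pos hRS hγR
  have h0' : ⟪γ, β⟫ = 0 := by rw [real_inner_comm]; exact h0
  have hζζ : ⟪β + γ, β + γ⟫ = ⟪β, β⟫ + ⟪γ, γ⟫ := by
    rw [inner_add_left, inner_add_right, inner_add_right, h0, h0']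
    ring
  have hsumpos : 0 < ⟪β, β⟫ + ⟪γ, γ⟫ := by linarith
  have hsumne : ⟪β, β⟫ + ⟪γ, γ⟫ ≠ 0 := ne_of_gt hsumpos
  obtain ⟨m₁, hm₁⟩ := hRS.integral (β + γ) hζR β hβR
  obtain ⟨m₂, hm₂⟩ := hRS.integral (β + γ) hζR γ hγR
  have hβζ : ⟪β, β + γ⟫ = ⟪β, β⟫ := by rw [inner_add_right, h0]; ring
  have hγζ : ⟪γ, β + γ⟫ = ⟪γ, γ⟫ := by rw [inner_add_right, h0']; ring
  rw [hβζ, hζζ] at hm₁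
  rw [hγζ, hζζ] at hm₂
  have hm₁' : 2 * ⟪β, β⟫ = m₁ * (⟪β, β⟫ + ⟪γ, γ⟫) := by
    field_simp at hm₁; linarith
  have hm₂' : 2 * ⟪γ, γ⟫ = m₂ * (⟪β, β⟫ + ⟪γ, γ⟫) := by
    field_simp at hm₂; linarith
  have hm₁pos : (1 : ℤ) ≤ m₁ := by
    by_contra h
    push_neg at h
    have : (m₁ : ℝ) ≤ 0 := by exact_mod_cast Int.lt_add_one_iff.mp h
    nlinarith
  have hm₂pos : (1 : ℤ) ≤ m₂ := by
    by_contra h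
    push_neg at h
    have : (m₂ : ℝ) ≤ 0 := by exact_mod_cast Int.lt_add_one_iff.mp h
    nlinarith
  have hsum2 : (m₁ : ℝ) + m₂ = 2 := by
    have h4 : ((m₁ : ℝ) + m₂) * (⟪β, β⟫ + ⟪γ, γ⟫) = 2 * (⟪β, β⟫ + ⟪γ, γ⟫) := by
      linarith
    have := mul_right_cancel₀ hsumne h4
    linarith
  have hm₁1 : m₁ = 1 := by
    have : m₁ + m₂ = 2 := by exact_mod_cast hsum2
    omega
  have haeqc : ⟪β, β⟫ = ⟪γ, γ⟫ := by
    rw [hm₁1] at hm₁'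
    push_cast at hm₁'
    linarith
  -- reflection in β sends β + γ to γ - β
  have h2 : 2 * ⟪β + γ, β⟫ / ⟪β, β⟫ = (2 : ℝ) := by
    have : ⟪β + γ, β⟫ = ⟪β, β⟫ := by rw [inner_add_left, h0']; ring
    rw [this, mul_div_assoc, div_self (ne_of_gt ha), mul_one]
  have hrefl := hRS.reflMem β hβR (β + γ) hζR
  rw [reflRoot, h2] at hrefl
  have heq2 : β + γ - (2 : ℝ) • β = γ - β := by
    rw [two_smul]; abel
  rw [heq2] at hrefl
  -- contradiction with the same-sign property of the root γ - β
  have hsign := repr_same_sign b hRS hv hbs hrefl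
  obtain ⟨i₀, hi₀⟩ := exists_pos_coord b hRS hbs hβ
  have hi₀S : i₀ ∈ S := by
    by_contra h
    rw [hSβ i₀ h] at hi₀
    exact lt_irrefl _ hi₀
  obtain ⟨k₀, hk₀⟩ := exists_pos_coord b hRS hbs hγ
  have hk₀S : k₀ ∉ S := by
    intro h
    rw [hSγ k₀ h] at hk₀
    exact lt_irrefl _ hk₀
  have hci : b.repr (γ - β) i₀ < 0 := by
    rw [map_sub]
    simp only [Finsupp.sub_apply]
    rw [hSγ i₀ hi₀S]
    linarith
  have hck : 0 < b.repr (γ - β) k₀ := by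
    rw [map_sub]
    simp only [Finsupp.sub_apply]
    rw [hSβ k₀ hk₀S]
    linarith
  rcases hsign with h | h
  · exact absurd (h i₀) (by linarith)
  · exact absurd (h k₀) (by linarith)

/-- Support dichotomy: if the simple base splits into two mutually orthogonal parts,
every root is supported entirely in one part. -/
lemma supp_dichotomy [Fintype ι] (hRS : IsRootSystem Rad) (hv : IsRegular Rad v)
    (hbs : simpleBase Rad v ⊆ Set.range b) (hb : ∀ i, b i ∈ simpleBase Rad v)
    (S : Set ι) (hS : ∀ i ∈ S, ∀ k ∉ S, ⟪b i, b k⟫ = 0) {ζ : V} (hζ : ζ ∈ Rad) :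
    (∀ i ∉ S, b.repr ζ i = 0) ∨ (∀ i ∈ S, b.repr ζ i = 0) := by
  classical
  -- first prove it for positive roots
  have hposCase : ∀ ζ ∈ posRoots Rad v,
      (∀ i ∉ S, b.repr ζ i = 0) ∨ (∀ i ∈ S, b.repr ζ i = 0) := by
    apply posRoots_induction hRS v
    · -- simple roots
      intro ζ hζs
      obtain ⟨j, hj⟩ := hbs hζs
      by_cases hjS : j ∈ S
      · left
        intro i hi
        rw [← hj, Module.Basis.repr_self, Finsupp.single_apply]
        split
        · rename_i hji; exact absurd (hji ▸ hjS) hi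
        · rfl
      · right
        intro i hi
        rw [← hj, Module.Basis.repr_self, Finsupp.single_apply]
        split
        · rename_i hji; exact absurd (hji ▸ hi) hjS
        · rfl
    · -- sums
      intro β γ hβ hγ hβγ Pβ Pγ
      -- the two aligned cases
      rcases Pβ with Pβ | Pβ <;> rcases Pγ with Pγ | Pγ
      · left; intro i hi; rw [map_add]; simp only [Finsupp.add_apply]
        rw [Pβ i hi, Pγ i hi]; ring
      case inl.inr | inr.inl =>
        -- mixed cases: derive a contradiction
        exfalso
        -- rename so that β is supported in S, γ in the complement
        rcases (by tauto :
            ((∀ i ∉ S, b.repr β i = 0) ∧ (∀ i ∈ S, b.repr γ i = 0)) ∨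
            ((∀ i ∉ S, b.repr γ i = 0) ∧ (∀ i ∈ S, b.repr β i = 0))) with h | h
        · exact mixed_case_aux b hRS hv hbs S hS hβ hγ hβγ h.1 h.2
        · exact mixed_case_aux b hRS hv hbs S hS hγ hβ (by rwa [add_comm]) h.1 h.2
      · right; intro i hi; rw [map_add]; simp only [Finsupp.add_apply]
        rw [Pβ i hi, Pγ i hi]; ring
  rcases pos_or_neg_root hRS hv hζ with h | h
  · exact hposCase ζ h
  · rcases hposCase _ h with h2 | h2
    · left
      intro i hi
      have := h2 i hi
      rw [map_neg] at this
      simp only [Finsupp.neg_apply] at this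
      linarith
    · right
      intro i hi
      have := h2 i hi
      rw [map_neg] at this
      simp only [Finsupp.neg_apply] at this
      linarith

end Coords


section Eta

variable (η : V → ℤ)
variable (hval : ∀ x ∈ AddSubgroup.closure Rad, η x = 1 ∨ η x = -1)
variable (hmul : ∀ x ∈ AddSubgroup.closure Rad, ∀ y ∈ AddSubgroup.closure Rad,
  η (x + y) = η x * η y)

include hval hmul in
lemma eta_zero : η 0 = 1 := by
  have h0 : (0 : V) ∈ AddSubgroup.closure Rad := zero_mem _
  have h := hmul 0 h0 0 h0
  rw [add_zero] at h
  rcases hval 0 h0 with h1 | h1 <;> rw [h1] at h ⊢ <;> omega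

include hval hmul in
lemma eta_neg {x : V} (hx : x ∈ AddSubgroup.closure Rad) : η (-x) = η x := by
  have hnx : -x ∈ AddSubgroup.closure Rad := neg_mem hx
  have h := hmul x hx (-x) hnx
  rw [add_neg_cancel, eta_zero η hval hmul] at h
  rcases hval x hx with h1 | h1 <;> rcases hval (-x) hnx with h2 | h2 <;>
    rw [h1, h2] at h ⊢ <;> omega

/-- Existence of a regular vector. -/
lemma exists_regular (hRS : IsRootSystem Rad) : ∃ v : V, IsRegular Rad v := by
  obtain ⟨w, hw⟩ := exists_orth_ne hRS.finite.toFinset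
    (fun α hα => hRS.nonzero α (hRS.finite.mem_toFinset.1 hα))
  exact ⟨w, fun α hα => hw α (hRS.finite.mem_toFinset.2 hα)⟩

include hval hmul in
/-- Existence of an integral vector representing the parity of η on all roots. -/
lemma exists_mu0 [FiniteDimensional ℝ V] (hRS : IsRootSystem Rad) :
    ∃ μ₀ : V, ∀ ζ ∈ Rad, ∃ n : ℤ, ⟪ζ, μ₀⟫ = (n : ℝ) ∧ (η ζ = -1 ↔ Odd n) := by
  classical
  obtain ⟨v₀, hv₀⟩ := exists_regular hRS
  set B : Set V := simpleBase Rad v₀ with hB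
  have hBRad : B ⊆ Rad := fun x hx => hx.1.1
  have hBfin : B.Finite := hRS.finite.subset hBRad
  haveI : Fintype ↥B := hBfin.fintype
  have li : LinearIndependent ℝ ((↑) : B → V) :=
    linearIndependent_of_obtuse (fun x hx => hx.1.2)
      (fun x hx y hy hxy => simple_obtuse hRS hv₀ hx hy hxy)
  have hsp : ⊤ ≤ Submodule.span ℝ (Set.range ((↑) : B → V)) := by
    rw [Subtype.range_coe, hB, simple_span hRS hv₀]
  set b : Module.Basis ↥B ℝ V := Module.Basis.mk li hsp with hbdef
  have hbapp : ∀ i : ↥B, b i = (i : V) := fun i => by rw [hbdef, Module.Basis.mk_apply]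
  set F : V →ₗ[ℝ] ℝ :=
    ∑ i : ↥B, (if η (i : V) = -1 then (1 : ℝ) else 0) • Module.Basis.coord b i with hF
  set μ₀ : V := (InnerProductSpace.toDual ℝ V).symm (LinearMap.toContinuousLinearMap F)
    with hμ₀def
  have hμ₀ : ∀ x : V, ⟪μ₀, x⟫ = F x := by
    intro x
    rw [hμ₀def, InnerProductSpace.toDual_symm_apply]
    rfl
  -- main claim by closure induction
  have claim : ∀ x ∈ AddSubgroup.closure B,
      x ∈ AddSubgroup.closure Rad ∧ ∃ n : ℤ, F x = (n : ℝ) ∧ (η x = -1 ↔ Odd n) := by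
    intro x hx
    induction hx using AddSubgroup.closure_induction with
    | mem x hxB =>
      constructor
      · exact AddSubgroup.subset_closure (hBRad hxB)
      · set i : ↥B := ⟨x, hxB⟩ with hi
        have hFx : F x = (if η x = -1 then (1 : ℝ) else 0) := by
          have hxbi : x = b i := by rw [hbapp]
          rw [hxbi, hF, LinearMap.sum_apply]
          rw [Finset.sum_eq_single i]
          · rw [LinearMap.smul_apply, Module.Basis.coord_apply, Module.Basis.repr_self,
              Finsupp.single_eq_same]
            rw [hbapp]
            simp
          · intro j _ hji
            rw [LinearMap.smul_apply, Module.Basis.coord_apply, Module.Basis.repr_self,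
              Finsupp.single_apply, if_neg (Ne.symm hji), smul_zero]
          · intro h; exact absurd (Finset.mem_univ i) h
        by_cases hx1 : η x = -1
        · refine ⟨1, ?_, ?_⟩
          · rw [hFx, if_pos hx1]; norm_num
          · rw [hx1]
            constructor
            · intro _; exact odd_one
            · intro _; rfl
        · refine ⟨0, ?_, ?_⟩
          · rw [hFx, if_neg hx1]; norm_num
          · constructor
            · intro h; exact absurd h hx1
            · intro h
              rw [Int.odd_iff] at h
              norm_num at h
    | zero =>
      refine ⟨zero_mem _, 0, by rw [map_zero]; norm_num, ?_⟩
      rw [eta_zero η hval hmul]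
      simp
    | add x y hxc hyc ihx ihy =>
      obtain ⟨hxm, n, hn, hnp⟩ := ihx
      obtain ⟨hym, m, hm, hmp⟩ := ihy
      refine ⟨add_mem hxm hym, n + m, ?_, ?_⟩
      · rw [map_add, hn, hm]; push_cast; ring
      · rw [hmul x hxm y hym]
        rcases hval x hxm with h1 | h1 <;> rcases hval y hym with h2 | h2
        · -- both 1 : product 1, both even
          have hne : ¬ Odd n := fun h => by
            have := hnp.mpr h; rw [h1] at this; norm_num at this
          have hme : ¬ Odd m := fun h => by
            have := hmp.mpr h; rw [h2] at this; norm_num at this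
          rw [h1, h2]
          norm_num
          exact (Int.not_odd_iff_even.mp hne).add (Int.not_odd_iff_even.mp hme)
        · have hne : ¬ Odd n := fun h => by
            have := hnp.mpr h; rw [h1] at this; norm_num at this
          have hmo : Odd m := hmp.mp h2
          rw [h1, h2]
          norm_num
          exact (Int.not_odd_iff_even.mp hne).add_odd hmo
        · have hno : Odd n := hnp.mp h1
          have hme : ¬ Odd m := fun h => by
            have := hmp.mpr h; rw [h2] at this; norm_num at this
          rw [h1, h2]
          norm_num
          exact hno.add_even (Int.not_odd_iff_even.mp hme)
        · have hno : Odd n := hnp.mp h1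
          have hmo : Odd m := hmp.mp h2
          rw [h1, h2]
          norm_num
          exact hno.add_odd hmo
    | neg x hxc ihx =>
      obtain ⟨hxm, n, hn, hnp⟩ := ihx
      refine ⟨neg_mem hxm, -n, ?_, ?_⟩
      · rw [map_neg, hn]; push_cast; ring
      · rw [eta_neg η hval hmul hxm, odd_neg]
        exact hnp
  -- every root lies in the subgroup closure of B
  have hRadCl : ∀ ζ ∈ Rad, ζ ∈ AddSubgroup.closure B := by
    intro ζ hζ
    have hmono : AddSubmonoid.closure B ≤ (AddSubgroup.closure B).toAddSubmonoid :=
      AddSubmonoid.closure_le.2 AddSubgroup.subset_closure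
    rcases pos_or_neg_root hRS hv₀ hζ with h | h
    · exact hmono (posRoots_mem_closure hRS v₀ ζ h)
    · have h1 : -ζ ∈ AddSubgroup.closure B := hmono (posRoots_mem_closure hRS v₀ (-ζ) h)
      have := neg_mem h1
      rwa [neg_neg] at this
  refine ⟨μ₀, fun ζ hζ => ?_⟩
  obtain ⟨_, n, hn, hnp⟩ := claim ζ (hRadCl ζ hζ)
  exact ⟨n, by rw [real_inner_comm, hμ₀, hn], hnp⟩

include hval in
/-- Minimization of the norm over the set of admissible integral vectors. -/
lemma exists_min_M [FiniteDimensional ℝ V] (hRS : IsRootSystem Rad)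
    (hne : ({x : V | ∀ ζ ∈ Rad, ∃ n : ℤ, ⟪ζ, x⟫ = (n : ℝ) ∧ (η ζ = -1 ↔ Odd n)}).Nonempty) :
    ∃ μ ∈ {x : V | ∀ ζ ∈ Rad, ∃ n : ℤ, ⟪ζ, x⟫ = (n : ℝ) ∧ (η ζ = -1 ↔ Odd n)},
      ∀ x ∈ {x : V | ∀ ζ ∈ Rad, ∃ n : ℤ, ⟪ζ, x⟫ = (n : ℝ) ∧ (η ζ = -1 ↔ Odd n)},
        ‖μ‖ ≤ ‖x‖ := by
  classical
  set M := {x : V | ∀ ζ ∈ Rad, ∃ n : ℤ, ⟪ζ, x⟫ = (n : ℝ) ∧ (η ζ = -1 ↔ Odd n)} with hM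
  have hclosed : IsClosed M := by
    have hMeq : M = ⋂ ζ ∈ Rad,
        (fun x : V => ⟪ζ, x⟫) ⁻¹' (((↑) : ℤ → ℝ) '' {n : ℤ | η ζ = -1 ↔ Odd n}) := by
      ext x
      simp only [hM, Set.mem_setOf_eq, Set.mem_iInter, Set.mem_preimage, Set.mem_image,
        Set.mem_setOf_eq]
      constructor
      · intro h ζ hζ
        obtain ⟨n, hn1, hn2⟩ := h ζ hζ
        exact ⟨n, hn2, hn1.symm⟩
      · intro h ζ hζ
        obtain ⟨n, hn2, hn1⟩ := h ζ hζ
        exact ⟨n, hn1.symm, hn2⟩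
    rw [hMeq]
    apply isClosed_biInter
    intro ζ _
    apply IsClosed.preimage
    · exact continuous_const.inner continuous_id
    · exact Int.isClosedEmbedding_coe_real.isClosedMap _ (isClosed_discrete _)
  obtain ⟨μ₁, hμ₁⟩ := hne
  have hKcompact : IsCompact (M ∩ Metric.closedBall 0 ‖μ₁‖) :=
    (isCompact_closedBall 0 ‖μ₁‖).inter_left hclosed
  have hKne : (M ∩ Metric.closedBall 0 ‖μ₁‖).Nonempty :=
    ⟨μ₁, hμ₁, by rw [Metric.mem_closedBall, dist_zero_right]⟩
  obtain ⟨μ, hμK, hmin⟩ := hKcompact.exists_isMinOn hKne continuous_norm.continuousOn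
  refine ⟨μ, hμK.1, fun x hx => ?_⟩
  rcases le_or_gt ‖x‖ ‖μ₁‖ with h | h
  · exact hmin ⟨hx, by rwa [Metric.mem_closedBall, dist_zero_right]⟩
  · have h1 : ‖μ‖ ≤ ‖μ₁‖ := hmin ⟨hμ₁, by rw [Metric.mem_closedBall, dist_zero_right]⟩
    linarith

end Eta


end Proof15

/-- for any homomorphism `η` from the root lattice of an irreducible root
system to `{±1}` there is a base of simple roots on which `η` takes the value `-1` at
most once. -/
theorem stmt15 {V : Type*} [NormedAddCommGroup V] [InnerProductSpace ℝ V]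
    [FiniteDimensional ℝ V] (Rad : Set V) (hRS : IsRootSystem Rad)
    (hirr : IsIrreducible Rad) (η : V → ℤ)
    (hval : ∀ x ∈ AddSubgroup.closure Rad, η x = 1 ∨ η x = -1)
    (hmul : ∀ x ∈ AddSubgroup.closure Rad, ∀ y ∈ AddSubgroup.closure Rad,
      η (x + y) = η x * η y) :
    ∃ v : V, IsRegular Rad v ∧
      ∀ α ∈ simpleBase Rad v, ∀ β ∈ simpleBase Rad v,
        η α = -1 → η β = -1 → α = β := by
  classical
  obtain ⟨μ₀, hμ₀⟩ := exists_mu0 η hval hmul hRS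
  obtain ⟨μ, hμM, hμmin⟩ := exists_min_M η hval hRS ⟨μ₀, hμ₀⟩
  obtain ⟨w, hw⟩ := exists_regular hRS
  -- bound on the norms of roots
  obtain ⟨C0, hC0⟩ := (hRS.finite.image (fun ζ => ‖ζ‖)).bddAbove
  set C : ℝ := max C0 0 with hCdef
  have hC : ∀ ζ ∈ Rad, ‖ζ‖ ≤ C := by
    intro ζ hζ
    have : ‖ζ‖ ≤ C0 := hC0 (Set.mem_image_of_mem _ hζ)
    exact le_trans this (le_max_left _ _)
  have hCnn : 0 ≤ C := le_max_right _ _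
  set ε : ℝ := 1 / (1 + C * ‖w‖) with hεdef
  have hden : 0 < 1 + C * ‖w‖ := by positivity
  have hε : 0 < ε := by rw [hεdef]; positivity
  have hsmall : ∀ ζ ∈ Rad, |⟪ζ, ε • w⟫| < 1 := by
    intro ζ hζ
    rw [real_inner_smul_right, abs_mul, abs_of_pos hε]
    have h1 : |⟪ζ, w⟫| ≤ ‖ζ‖ * ‖w‖ := abs_real_inner_le_norm ζ w
    have h2 : ‖ζ‖ * ‖w‖ ≤ C * ‖w‖ := by
      apply mul_le_mul_of_nonneg_right (hC ζ hζ) (norm_nonneg w)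
    have h3 : ε * |⟪ζ, w⟫| ≤ ε * (C * ‖w‖) := by
      apply mul_le_mul_of_nonneg_left (le_trans h1 h2) (le_of_lt hε)
    have h4 : ε * (C * ‖w‖) < 1 := by
      rw [hεdef, div_mul_eq_mul_div, one_mul, div_lt_one hden]
      linarith
    linarith
  set v : V := μ + ε • w with hvdef
  have hvsplit : ∀ ζ : V, ⟪ζ, v⟫ = ⟪ζ, μ⟫ + ⟪ζ, ε • w⟫ := by
    intro ζ; rw [hvdef, inner_add_right]
  have hregv : IsRegular Rad v := by
    intro ζ hζ
    obtain ⟨n, hn, _⟩ := hμM ζ hζ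
    by_cases hn0 : n = 0
    · rw [hvsplit, hn, hn0]
      push_cast
      rw [zero_add, real_inner_smul_right]
      exact fun hc => hw ζ hζ (by
        rcases mul_eq_zero.1 hc with h | h
        · exact absurd h (ne_of_gt hε)
        · exact h)
    · intro hc
      rw [hvsplit, hn] at hc
      have h1 : |⟪ζ, ε • w⟫| < 1 := hsmall ζ hζ
      have h2 : (1 : ℝ) ≤ |(n : ℝ)| := by
        have := Int.one_le_abs hn0
        calc (1:ℝ) = ((1:ℤ):ℝ) := by norm_num
          _ ≤ ((|n| : ℤ) : ℝ) := by exact_mod_cast this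
          _ = |(n : ℝ)| := by push_cast; rfl
      have h3 : (n : ℝ) = -⟪ζ, ε • w⟫ := by linarith
      rw [h3, abs_neg] at h2
      linarith
  -- sign and parity data for positive roots
  have hkpos : ∀ ζ ∈ posRoots Rad v, ∃ n : ℤ, ⟪ζ, μ⟫ = (n : ℝ) ∧ 0 ≤ n ∧
      (η ζ = -1 ↔ Odd n) := by
    intro ζ hζ
    obtain ⟨n, hn, hp⟩ := hμM ζ hζ.1
    refine ⟨n, hn, ?_, hp⟩
    by_contra hneg
    push_neg at hneg
    have h1' : n ≤ -1 := by omega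
    have h1 : (n : ℝ) ≤ -1 := by exact_mod_cast h1'
    have h2 : |⟪ζ, ε • w⟫| < 1 := hsmall ζ hζ.1
    have h3 : 0 < ⟪ζ, v⟫ := hζ.2
    rw [hvsplit, hn] at h3
    have := abs_lt.1 h2
    linarith
  refine ⟨v, hregv, ?_⟩
  intro α hα β hβ hηα hηβ
  by_contra hne
  -- basis from the simple base
  set B : Set V := simpleBase Rad v with hBdef
  have hBRad : B ⊆ Rad := fun x hx => hx.1.1
  have hBfin : B.Finite := hRS.finite.subset hBRad
  haveI : Fintype ↥B := hBfin.fintype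
  have li : LinearIndependent ℝ ((↑) : B → V) :=
    linearIndependent_of_obtuse (fun x hx => hx.1.2)
      (fun x hx y hy hxy => simple_obtuse hRS hregv hx hy hxy)
  have hsp : ⊤ ≤ Submodule.span ℝ (Set.range ((↑) : B → V)) := by
    rw [Subtype.range_coe, hBdef, simple_span hRS hregv]
  set b : Module.Basis ↥B ℝ V := Module.Basis.mk li hsp with hbdef
  have hbapp : ∀ i : ↥B, b i = (i : V) := fun i => by rw [hbdef, Module.Basis.mk_apply]
  have hbs : B ⊆ Set.range b := fun x hx => ⟨⟨x, hx⟩, hbapp _⟩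
  have hbmem : ∀ i : ↥B, b i ∈ simpleBase Rad v := fun i => by rw [hbapp]; exact i.2
  have hob : ∀ i j : ↥B, i ≠ j → ⟪b i, b j⟫ ≤ 0 := by
    intro i j hij
    rw [hbapp, hbapp]
    exact simple_obtuse hRS hregv i.2 j.2 (fun hc => hij (Subtype.ext hc))
  set iα : ↥B := ⟨α, hα⟩ with hiα
  set iβ : ↥B := ⟨β, hβ⟩ with hiβ
  have hiαβ : iα ≠ iβ := fun h => hne (congrArg Subtype.val h)
  -- the dual vector of β
  set wβ : V := (InnerProductSpace.toDual ℝ V).symm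
    (LinearMap.toContinuousLinearMap (Module.Basis.coord b iβ)) with hwβdef
  have hwβ : ∀ x : V, ⟪wβ, x⟫ = b.repr x iβ := by
    intro x
    rw [hwβdef, InnerProductSpace.toDual_symm_apply]
    rfl
  have hwβinner : ∀ i : ↥B, ⟪b i, wβ⟫ = (if i = iβ then (1:ℝ) else 0) := by
    intro i
    rw [real_inner_comm, hwβ, Module.Basis.repr_self, Finsupp.single_apply]
  -- μ - 2wβ is also admissible
  have hμ'M : (μ - (2:ℝ) • wβ) ∈
      {x : V | ∀ ζ ∈ Rad, ∃ n : ℤ, ⟪ζ, x⟫ = (n : ℝ) ∧ (η ζ = -1 ↔ Odd n)} := by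
    intro ζ hζ
    obtain ⟨n, hn, hp⟩ := hμM ζ hζ
    obtain ⟨m, hm⟩ := repr_int_of_root b hRS hregv hbs hζ iβ
    refine ⟨n - 2 * m, ?_, ?_⟩
    · rw [inner_sub_right, real_inner_smul_right, real_inner_comm wβ ζ, hwβ, hn, hm]
      push_cast
      ring
    · have hpar : Odd (n - 2 * m) ↔ Odd n := by
        rw [Int.odd_iff, Int.odd_iff]
        omega
      rw [hpar]
      exact hp
  have hm := hμmin _ hμ'M
  have hkey : ⟪μ, wβ⟫ ≤ ⟪wβ, wβ⟫ := by
    have h1 : ‖μ‖ ^ 2 ≤ ‖μ - (2:ℝ) • wβ‖ ^ 2 := by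
      apply pow_le_pow_left₀ (norm_nonneg μ) hm
    rw [norm_sub_sq_real, real_inner_smul_right, norm_smul] at h1
    have h2 : ‖(2:ℝ)‖ = 2 := by norm_num
    rw [h2, mul_pow] at h1
    have h3 : ⟪wβ, wβ⟫ = ‖wβ‖ ^ 2 := real_inner_self_eq_norm_sq wβ
    nlinarith
  -- coordinates of wβ
  set c : ↥B → ℝ := fun i => b.repr wβ i with hcdef
  have hcnn : ∀ i, 0 ≤ c i :=
    repr_nonneg_of_inner_nonneg b hob wβ
      (fun i => by rw [hwβinner]; split <;> norm_num)
  have hwsum : wβ = ∑ i, c i • b i := (Module.Basis.sum_repr b wβ).symm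
  have hnormwβ : ⟪wβ, wβ⟫ = c iβ := hwβ wβ
  -- integer pairing values of the simple roots with μ
  have hki : ∀ i : ↥B, ∃ n : ℤ, ⟪(b i : V), μ⟫ = (n : ℝ) ∧ 0 ≤ n ∧
      (η (b i) = -1 ↔ Odd n) := by
    intro i
    rw [hbapp]
    exact hkpos (i : V) i.2.1
  choose k hk1 hk2 hk3 using hki
  have hexp : ⟪μ, wβ⟫ = ∑ i, c i * (k i : ℝ) := by
    conv_lhs => rw [hwsum]
    rw [inner_sum]
    apply Finset.sum_congr rfl
    intro i _
    rw [real_inner_smul_right, real_inner_comm, hk1 i]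
  have hkα : 1 ≤ k iα := by
    have hodd : Odd (k iα) := (hk3 iα).1 (by rw [hbapp]; exact hηα)
    have := hk2 iα
    rw [Int.odd_iff] at hodd
    omega
  have hkβ : 1 ≤ k iβ := by
    have hodd : Odd (k iβ) := (hk3 iβ).1 (by rw [hbapp]; exact hηβ)
    have := hk2 iβ
    rw [Int.odd_iff] at hodd
    omega
  have hsum_ge : c iα + c iβ ≤ ⟪μ, wβ⟫ := by
    rw [hexp]
    have hpair : c iα * (k iα : ℝ) + c iβ * (k iβ : ℝ)
        = ∑ i ∈ ({iα, iβ} : Finset ↥B), c i * (k i : ℝ) := by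
      rw [Finset.sum_pair hiαβ]
    have hsub : ∑ i ∈ ({iα, iβ} : Finset ↥B), c i * (k i : ℝ) ≤ ∑ i, c i * (k i : ℝ) := by
      apply Finset.sum_le_sum_of_subset_of_nonneg (Finset.subset_univ _)
      intro i _ _
      have h1 : (0:ℝ) ≤ (k i : ℝ) := by exact_mod_cast hk2 i
      exact mul_nonneg (hcnn i) h1
    have h1 : c iα ≤ c iα * (k iα : ℝ) := by
      apply le_mul_of_one_le_right (hcnn iα)
      exact_mod_cast hkα
    have h2 : c iβ ≤ c iβ * (k iβ : ℝ) := by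
      apply le_mul_of_one_le_right (hcnn iβ)
      exact_mod_cast hkβ
    linarith [hpair ▸ hsub]
  have hciα : c iα = 0 := by
    have : c iα ≤ 0 := by linarith [hnormwβ ▸ hkey]
    exact le_antisymm this (hcnn iα)
  -- the support of wβ
  set S : Set ↥B := {i | 0 < c i} with hSdef
  have hwβne : wβ ≠ 0 := by
    intro hc
    have := hwβinner iβ
    rw [hc, inner_zero_right, if_pos rfl] at this
    norm_num at this
  have hiβS : iβ ∈ S := by
    have h1 : 0 < ⟪wβ, wβ⟫ := by
      rw [real_inner_self_eq_norm_sq]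
      have : ‖wβ‖ ≠ 0 := norm_ne_zero_iff.2 hwβne
      positivity
    rw [hnormwβ] at h1
    exact h1
  have hiαS : iα ∉ S := by
    rw [hSdef]
    simp only [Set.mem_setOf_eq, hciα]
    exact lt_irrefl 0
  have hSorth : ∀ i ∈ S, ∀ k' ∉ S, ⟪b i, b k'⟫ = 0 := by
    intro i hi k₁ hk₁
    have hck : c k₁ = 0 := by
      have h1 : ¬ 0 < c k₁ := hk₁
      exact le_antisymm (not_lt.1 h1) (hcnn k₁)
    have hk₁β : k₁ ≠ iβ := fun h => hk₁ (h ▸ hiβS)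
    have h0 : ⟪b k₁, wβ⟫ = 0 := by rw [hwβinner, if_neg hk₁β]
    rw [hwsum, inner_sum] at h0
    have hterms : ∀ j : ↥B, j ∈ Finset.univ → ⟪b k₁, c j • b j⟫ ≤ 0 := by
      intro j _
      rw [real_inner_smul_right]
      by_cases hjk : j = k₁
      · rw [hjk, hck]; norm_num
      · exact mul_nonpos_of_nonneg_of_nonpos (hcnn j)
          (by rw [real_inner_comm]; exact hob j k₁ hjk)
    have hzero := (Finset.sum_eq_zero_iff_of_nonpos hterms).1 h0 i (Finset.mem_univ i)
    rw [real_inner_smul_right] at hzero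
    rcases mul_eq_zero.1 hzero with h | h
    · exact absurd h (ne_of_gt hi)
    · rw [real_inner_comm]; exact h
  -- contradiction with irreducibility
  apply hirr
  set R₁ : Set V := {ζ | ζ ∈ Rad ∧ ∀ i : ↥B, i ∉ S → b.repr ζ i = 0} with hR₁def
  have hR₁sub : R₁ ⊆ Rad := fun ζ hζ => hζ.1
  refine ⟨R₁, Rad \ R₁, ?_, ?_, ?_, ?_⟩
  · refine ⟨β, hBRad hβ, ?_⟩
    intro i hiS
    have hiiβ : i ≠ iβ := fun h => hiS (h ▸ hiβS)
    have : (β : V) = b iβ := (hbapp iβ).symm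
    rw [this, Module.Basis.repr_self, Finsupp.single_apply, if_neg (Ne.symm hiiβ)]
  · refine ⟨α, ⟨hBRad hα, ?_⟩⟩
    intro hcon
    have h1 := hcon.2 iα hiαS
    have h2 : (α : V) = b iα := (hbapp iα).symm
    rw [h2, Module.Basis.repr_self, Finsupp.single_eq_same] at h1
    norm_num at h1
  · exact (Set.union_diff_cancel hR₁sub).symm
  · intro ζ₁ hζ₁ ζ₂ hζ₂
    have hζ₂S : ∀ i ∈ S, b.repr ζ₂ i = 0 := by
      rcases supp_dichotomy b hRS hregv hbs hbmem S hSorth hζ₂.1 with h | h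
      · exact absurd ⟨hζ₂.1, h⟩ hζ₂.2
      · exact h
    calc ⟪ζ₁, ζ₂⟫ = ⟪∑ i, b.repr ζ₁ i • b i, ζ₂⟫ := by rw [Module.Basis.sum_repr]
      _ = 0 := by
        rw [sum_inner]
        apply Finset.sum_eq_zero
        intro i _
        rw [real_inner_smul_left]
        by_cases hiS : i ∈ S
        · have hbi : ⟪b i, ζ₂⟫ = 0 := by
            calc ⟪b i, ζ₂⟫ = ⟪b i, ∑ j, b.repr ζ₂ j • b j⟫ := by rw [Module.Basis.sum_repr]
              _ = 0 := by
                rw [inner_sum]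
                apply Finset.sum_eq_zero
                intro j _
                rw [real_inner_smul_right]
                by_cases hjS : j ∈ S
                · rw [hζ₂S j hjS]; ring
                · rw [hSorth i hiS j hjS]; ring
          rw [hbi]; ring
        · rw [hζ₁.2 i hiS]; ring

end PaperRS
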